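/- Let u ∈ ℤ^E be a nonzero integer vector with Au = 0. Then u can be written as a finite sum u = Σ_i λ_i·C_i where each λ_i is a positive integer, each C_i is a signed circuit of A (a {−1,0,1}-vector) whose support is contained in the support of u, and for every e in the support of C_i the sign of C_i(e) agrees with the sign of u(e). Moreover, if all coordinates of u lie in {−1, 0, 1}, then one can take all λ_i = 1 and the supports of the C_i pairwise disjoint. -/

import Mathlib

open Matrix

/-- A vector with all entries in `{-1,0,1}`. -/
def SignVec {m : ℕ} (C : Fin m → ℤ) : Prop := ∀ e, C e = -1 ∨ C e = 0 ∨ C e = 1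

/-- A signed circuit of `A`. -/
def IsCircuit {r m : ℕ} (A : Matrix (Fin r) (Fin m) ℤ) (C : Fin m → ℤ) : Prop :=
  SignVec C ∧ C ≠ 0 ∧ A.mulVec C = 0 ∧
    ∀ v : Fin m → ℤ, v ≠ 0 → A.mulVec v = 0 →
      {e | v e ≠ 0} ⊆ {e | C e ≠ 0} → {e | v e ≠ 0} = {e | C e ≠ 0}

open Module Submodule in
lemma rowSelect {r s : ℕ} (M : Matrix (Fin r) (Fin s) ℚ)
    (h : ∀ c : Fin s → ℚ, M.mulVec c = 0 → c = 0) :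
    ∃ ρ : Fin s → Fin r, (M.submatrix ρ id).det ≠ 0 := by
  classical
  have hinj : Function.Injective M.mulVec := by
    intro x y hxy
    have := h (x - y) (by rw [mulVec_sub, hxy, sub_self])
    exact sub_eq_zero.mp this
  have hcols : LinearIndependent ℚ (fun j => Mᵀ j) := mulVec_injective_iff.mp hinj
  have hrank : M.rank = s := by
    rw [Matrix.rank, Matrix.range_mulVecLin, show Set.range M.col = Set.range (fun j => Mᵀ j) from rfl,
      finrank_span_eq_card hcols, Fintype.card_fin]
  have hrankT : Mᵀ.rank = s := by rw [Matrix.rank_transpose, hrank]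
  have hrows : finrank ℚ (span ℚ (Set.range (fun i => M i))) = s := by
    have hMT : Set.range Mᵀᵀ = Set.range (fun i => M i) := by
      rw [transpose_transpose]
    rw [Matrix.rank, Matrix.range_mulVecLin, show Set.range Mᵀ.col = Set.range Mᵀᵀ from rfl, hMT] at hrankT
    exact hrankT
  obtain ⟨b, hbsub, hbspan, hbind⟩ := exists_linearIndependent ℚ (Set.range (fun i => M i))
  have hbfin : b.Finite := hbind.finite
  letI : Fintype b := hbfin.fintype
  have hbcard : b.toFinset.card = s := by
    have := finrank_span_set_eq_card hbind
    rw [hbspan, hrows] at this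
    exact this.symm
  -- equivalence Fin s ≃ b.toFinset
  let eqv : Fin s ≃ b.toFinset := (Finset.equivFinOfCardEq hbcard).symm
  have hmem : ∀ k : Fin s, ((eqv k : Fin s → ℚ)) ∈ Set.range (fun i => M i) := by
    intro k
    apply hbsub
    exact Set.mem_toFinset.mp (eqv k).2
  choose ρ hρ using fun k => hmem k
  refine ⟨ρ, ?_⟩
  -- rows of the submatrix are linearly independent
  have hindrows : LinearIndependent ℚ (fun k : Fin s => M (ρ k)) := by
    have h1 : LinearIndependent ℚ (fun x : b => (x : Fin s → ℚ)) := hbind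
    have h2 : LinearIndependent ℚ (fun x : b.toFinset => (x : Fin s → ℚ)) := by
      apply h1.comp (fun x : b.toFinset => (⟨x.1, Set.mem_toFinset.mp x.2⟩ : b))
      intro x y hxy
      rw [Subtype.ext_iff] at hxy ⊢
      exact hxy
    have h3 := h2.comp eqv eqv.injective
    convert h3 using 1
    funext k
    exact hρ k
  intro hdet
  obtain ⟨v, hv0, hv⟩ := (Matrix.exists_vecMul_eq_zero_iff).mpr hdet
  apply hv0
  have := linearIndependent_iff'.mp hindrows Finset.univ v ?_
  · funext k; exact this k (Finset.mem_univ k)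
  · funext j
    have := congrFun hv j
    simpa [Matrix.vecMul, dotProduct, Finset.sum_apply] using this

lemma exists_min_conformal {r m : ℕ} (Aq : Matrix (Fin r) (Fin m) ℚ)
    (u : Fin m → ℚ) (hu : u ≠ 0) (hker : Aq.mulVec u = 0) :
    ∃ w : Fin m → ℚ, w ≠ 0 ∧ Aq.mulVec w = 0 ∧ (∀ e, w e ≠ 0 → 0 < w e * u e) ∧
      ∀ v : Fin m → ℚ, v ≠ 0 → Aq.mulVec v = 0 →
        {e | v e ≠ 0} ⊆ {e | w e ≠ 0} → {e | v e ≠ 0} = {e | w e ≠ 0} := by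
  classical
  set P : (Fin m → ℚ) → Prop :=
    fun w => w ≠ 0 ∧ Aq.mulVec w = 0 ∧ (∀ e, w e ≠ 0 → 0 < w e * u e) with hP
  set supp : (Fin m → ℚ) → Finset (Fin m) :=
    fun w => Finset.univ.filter (fun e => w e ≠ 0) with hsupp
  have hPu : P u := ⟨hu, hker, fun e he => mul_self_pos.mpr he⟩
  have hN : (∃ n, ∃ w, P w ∧ (supp w).card = n) := ⟨_, u, hPu, rfl⟩
  obtain ⟨w, hPw, hcard⟩ := Nat.find_spec hN
  refine ⟨w, hPw.1, hPw.2.1, hPw.2.2, ?_⟩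
  have hmincard : ∀ w', P w' → Nat.find hN ≤ (supp w').card := by
    intro w' hw'
    exact Nat.find_le ⟨w', hw', rfl⟩
  intro v hv0 hvker hsub
  by_contra hne
  have hssub : ∀ e, v e ≠ 0 → w e ≠ 0 := fun e he => hsub he
  have hex : ∃ e1, w e1 ≠ 0 ∧ v e1 = 0 := by
    by_contra hc
    push_neg at hc
    apply hne
    ext e
    simp only [Set.mem_setOf_eq]
    exact ⟨fun h => hsub h, fun h => hc e h⟩
  obtain ⟨e1, he1w, he1v⟩ := hex
  have hsvne : (supp v).Nonempty := by
    obtain ⟨e, he⟩ := Function.ne_iff.mp hv0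
    refine ⟨e, ?_⟩
    simp only [hsupp, Finset.mem_filter, Finset.mem_univ, true_and]
    exact fun h => he (by rw [h]; rfl)
  obtain ⟨e0, he0mem, he0min⟩ := Finset.exists_min_image (supp v) (fun e => |w e / v e|) hsvne
  have hv_e0 : v e0 ≠ 0 := by simpa [hsupp] using he0mem
  have hw_e0 : w e0 ≠ 0 := hssub e0 hv_e0
  set t : ℚ := w e0 / v e0 with ht
  set w' : Fin m → ℚ := w - t • v with hw'
  have hw'app : ∀ e, w' e = w e - t * v e := fun e => by simp [hw']
  have hkey : ∀ e, w' e ≠ 0 → 0 < w' e * w e := by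
    intro e he
    by_cases hve : v e = 0
    · have h1 : w' e = w e := by rw [hw'app, hve]; ring
      rw [h1] at he ⊢
      exact mul_self_pos.mpr he
    · have hwe : w e ≠ 0 := hssub e hve
      have hmin := he0min e (by simp [hsupp, hve])
      have habs : |t * v e| ≤ |w e| := by
        rw [abs_mul]
        have h1 : |t| ≤ |w e| / |v e| := le_trans hmin (le_of_eq (abs_div _ _))
        calc |t| * |v e| ≤ (|w e| / |v e|) * |v e| :=
              mul_le_mul_of_nonneg_right h1 (abs_nonneg _)
          _ = |w e| := div_mul_cancel₀ _ (abs_ne_zero.mpr hve)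
      have hne' : w e - t * v e ≠ 0 := by rw [← hw'app]; exact he
      have hge : 0 ≤ (w e - t * v e) * w e := by
        have h2 : t * v e * w e ≤ |t * v e| * |w e| :=
          (le_abs_self _).trans (le_of_eq (abs_mul _ _))
        nlinarith [abs_mul_abs_self (w e), mul_le_mul_of_nonneg_right habs (abs_nonneg (w e))]
      rw [hw'app]
      rcases lt_or_eq_of_le hge with h | h
      · exact h
      · exact absurd h.symm (mul_ne_zero hne' hwe)
  have hw'ker : Aq.mulVec w' = 0 := by
    rw [hw', mulVec_sub, mulVec_smul, hPw.2.1, hvker, smul_zero, sub_zero]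
  have hw'ne : w' ≠ 0 := by
    intro h0
    have : w' e1 = 0 := by rw [h0]; rfl
    rw [hw'app, he1v] at this
    apply he1w
    linarith [this]
  have hw'conf : ∀ e, w' e ≠ 0 → 0 < w' e * u e := by
    intro e he
    have h1 := hkey e he
    have hwe : w e ≠ 0 := by
      intro h
      rw [h, mul_zero] at h1
      exact lt_irrefl 0 h1
    have h2 := hPw.2.2 e hwe
    nlinarith [mul_pos h1 h2, mul_self_pos.mpr hwe]
  have hPw' : P w' := ⟨hw'ne, hw'ker, hw'conf⟩
  have hsublt : supp w' ⊂ supp w := by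
    constructor
    · intro e he
      simp only [hsupp, Finset.mem_filter, Finset.mem_univ, true_and] at he ⊢
      intro h
      have := hkey e he
      rw [h, mul_zero] at this
      exact lt_irrefl 0 this
    · intro hcon
      have he0w : e0 ∈ supp w := by simp [hsupp, hw_e0]
      have := hcon he0w
      simp only [hsupp, Finset.mem_filter, Finset.mem_univ, true_and] at this
      apply this
      rw [hw'app, ht]
      field_simp
      ring
  have := hmincard w' hPw'
  have hlt : (supp w').card < (supp w).card := Finset.card_lt_card hsublt
  omega

lemma tu_ratio {r m : ℕ} (A : Matrix (Fin r) (Fin m) ℤ) (hTU : A.IsTotallyUnimodular)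
    (w : Fin m → ℚ) (hker : (A.map (Int.cast : ℤ → ℚ)).mulVec w = 0)
    (hmin : ∀ v : Fin m → ℚ, v ≠ 0 → (A.map (Int.cast : ℤ → ℚ)).mulVec v = 0 →
      {e | v e ≠ 0} ⊆ {e | w e ≠ 0} → {e | v e ≠ 0} = {e | w e ≠ 0})
    (e0 : Fin m) (he0 : w e0 ≠ 0) :
    ∀ e, w e / w e0 = -1 ∨ w e / w e0 = 0 ∨ w e / w e0 = 1 := by
  classical
  set Aq := A.map (Int.cast : ℤ → ℚ) with hAq
  set S : Finset (Fin m) := Finset.univ.filter (fun e => w e ≠ 0) with hS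
  set S' : Finset (Fin m) := S.erase e0 with hS'
  set s : ℕ := S'.card with hs
  have he0S : e0 ∈ S := by simp [hS, he0]
  have he0S' : e0 ∉ S' := Finset.notMem_erase e0 S
  have hinsert : insert e0 S' = S := Finset.insert_erase he0S
  set eqv : {x // x ∈ S'} ≃ Fin s := S'.equivFin with heqv
  set g : Fin s → Fin m := fun j => (eqv.symm j : Fin m) with hg
  have hgS' : ∀ j, g j ∈ S' := fun j => (eqv.symm j).2
  have hgw : ∀ j, w (g j) ≠ 0 := by
    intro j
    have := hgS' j
    rw [hS'] at this
    have := Finset.mem_of_mem_erase this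
    simpa [hS] using this
  have hginv : ∀ (e : Fin m) (h : e ∈ S'), g (eqv ⟨e, h⟩) = e := by
    intro e h
    simp [hg, heqv]
  -- sum over S' as sum over Fin s
  have hsum : ∀ f : Fin m → ℚ, ∑ j : Fin s, f (g j) = ∑ e ∈ S', f e := by
    intro f
    rw [show (∑ e ∈ S', f e) = ∑ x : {x // x ∈ S'}, f x from (Finset.sum_coe_sort S' f).symm]
    exact Equiv.sum_comp eqv.symm (fun x : {x // x ∈ S'} => f x)
  -- row expansion of the kernel equation
  have hrow : ∀ i, (A i e0 : ℚ) * w e0 + ∑ j : Fin s, (A i (g j) : ℚ) * w (g j) = 0 := by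
    intro i
    have h0 := congrFun hker i
    simp only [Matrix.mulVec, dotProduct, hAq, Matrix.map_apply, Pi.zero_apply] at h0
    have h1 : ∑ e ∈ S, (A i e : ℚ) * w e = 0 := by
      have h2 : ∑ e ∈ S, (A i e : ℚ) * w e = ∑ e ∈ Finset.univ, (A i e : ℚ) * w e := by
        apply Finset.sum_subset (Finset.subset_univ S)
        intro e _ heS
        have : w e = 0 := by
          by_contra hwe
          exact heS (by simp [hS, hwe])
        rw [this, mul_zero]
      rw [h2, h0]
    rw [hsum (fun e => (A i e : ℚ) * w e)]
    rw [← hinsert, Finset.sum_insert he0S'] at h1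
    exact h1
  -- the column submatrix has trivial kernel
  set M : Matrix (Fin r) (Fin s) ℚ := fun i j => (A i (g j) : ℚ) with hM
  have hMker : ∀ c : Fin s → ℚ, M.mulVec c = 0 → c = 0 := by
    intro c hc
    set v : Fin m → ℚ := fun e => if h : e ∈ S' then c (eqv ⟨e, h⟩) else 0 with hv
    have hvg : ∀ j, v (g j) = c j := by
      intro j
      rw [hv]
      simp only [dif_pos (hgS' j)]
      congr 1
      have : (⟨g j, hgS' j⟩ : {x // x ∈ S'}) = eqv.symm j := Subtype.ext rfl
      rw [this, Equiv.apply_symm_apply]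
    have hvker : Aq.mulVec v = 0 := by
      funext i
      have h0 : ∑ e ∈ S', (A i e : ℚ) * v e = ∑ j : Fin s, (A i (g j) : ℚ) * v (g j) :=
        (hsum (fun e => (A i e : ℚ) * v e)).symm
      simp only [Matrix.mulVec, dotProduct, hAq, Matrix.map_apply, Pi.zero_apply]
      rw [show (∑ e : Fin m, (A i e : ℚ) * v e) = ∑ e ∈ S', (A i e : ℚ) * v e by
        symm
        apply Finset.sum_subset (Finset.subset_univ S')
        intro e _ heS
        rw [hv]
        simp [dif_neg heS]]
      rw [h0]
      have := congrFun hc i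
      simp only [Matrix.mulVec, dotProduct, hM, Pi.zero_apply] at this
      rw [← this]
      congr 1
      funext j
      rw [hvg]
    have hv0 : v = 0 := by
      by_contra hvne
      have hsubs : {e | v e ≠ 0} ⊆ {e | w e ≠ 0} := by
        intro e he
        simp only [Set.mem_setOf_eq] at he ⊢
        by_contra hwe
        have hnot : e ∉ S' := by
          intro hmem
          have h2 := Finset.mem_of_mem_erase (hS' ▸ hmem)
          rw [hS, Finset.mem_filter] at h2
          exact h2.2 hwe
        apply he
        rw [hv]
        simp [dif_neg hnot]
      have heq := hmin v hvne hvker hsubs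
      have : e0 ∈ {e | v e ≠ 0} := by
        rw [heq]
        exact he0
      simp only [Set.mem_setOf_eq, hv, dif_neg he0S'] at this
      exact this rfl
    funext j
    rw [← hvg j, hv0]
    rfl
  obtain ⟨ρ, hdet⟩ := rowSelect M hMker
  set B : Matrix (Fin s) (Fin s) ℚ := M.submatrix ρ id with hB
  -- TU facts over ℚ
  have hTUq : ∀ (f : Fin s → Fin r) (gg : Fin s → Fin m),
      (Matrix.of (fun k j => (A (f k) (gg j) : ℚ))).det = -1 ∨
      (Matrix.of (fun k j => (A (f k) (gg j) : ℚ))).det = 0 ∨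
      (Matrix.of (fun k j => (A (f k) (gg j) : ℚ))).det = 1 := by
    intro f gg
    have h1 := (Matrix.isTotallyUnimodular_iff A).mp hTU s f gg
    obtain ⟨z, hz⟩ := h1
    have hcast : Matrix.of (fun k j => (A (f k) (gg j) : ℚ))
        = (Int.castRingHom ℚ).mapMatrix (A.submatrix f gg) := by
      ext k j
      simp [RingHom.mapMatrix_apply, Matrix.map_apply]
    rw [hcast, ← RingHom.map_det, ← hz]
    cases z with
    | neg => left; simp
    | zero => right; left; simp
    | pos => right; right; simp
  have hdet1 : B.det = 1 ∨ B.det = -1 := by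
    have := hTUq ρ g
    have hBeq : B = Matrix.of fun k j => (A (ρ k) (g j) : ℚ) := by
      ext k j
      simp [hB, hM]
      rfl
    rw [← hBeq] at this
    rcases this with h | h | h
    · right; exact h
    · exact absurd h hdet
    · left; exact h
  set x : Fin s → ℚ := fun j => -(w (g j) / w e0) with hx
  set b : Fin s → ℚ := fun k => (A (ρ k) e0 : ℚ) with hb
  have hBx : B.mulVec x = b := by
    funext k
    have hr := hrow (ρ k)
    simp only [Matrix.mulVec, dotProduct, hB, hM, Matrix.submatrix_apply, id_eq, hx, hb]
    have h2 : ∑ j : Fin s, (A (ρ k) (g j) : ℚ) * w (g j) = -((A (ρ k) e0 : ℚ) * w e0) := by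
      linarith [hr]
    have h3 : ∀ j : Fin s, (A (ρ k) (g j) : ℚ) * -(w (g j) / w e0)
        = ((A (ρ k) (g j) : ℚ) * w (g j)) * (-(w e0)⁻¹) := by
      intro j
      rw [div_eq_mul_inv]
      ring
    change ∑ j : Fin s, (A (ρ k) (g j) : ℚ) * -(w (g j) / w e0) = _
    rw [Finset.sum_congr rfl (fun j _ => h3 j), ← Finset.sum_mul, h2]
    field_simp
  have hunit : IsUnit B.det := isUnit_iff_ne_zero.mpr hdet
  have hxcram : ∀ j, B.det * x j = (B.updateCol j b).det := by
    have h1 : B.det • (B⁻¹ *ᵥ b) = cramer B b := det_smul_inv_mulVec_eq_cramer B b hunit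
    have h2 : B⁻¹ *ᵥ b = x := by
      rw [← hBx, mulVec_mulVec, nonsing_inv_mul B hunit, one_mulVec]
    rw [h2] at h1
    intro j
    have h3 := congrFun h1 j
    simpa [cramer_apply, Pi.smul_apply, smul_eq_mul] using h3
  have hxval : ∀ j, x j = -1 ∨ x j = 0 ∨ x j = 1 := by
    intro j
    have hup : B.updateCol j b = Matrix.of fun k l => (A (ρ k) (Function.update g j e0 l) : ℚ) := by
      ext k l
      by_cases h : l = j
      · subst h
        simp [Matrix.updateCol_apply, hb, Function.update_self]
      · simp [Matrix.updateCol_apply, h, Function.update_of_ne h, hB, hM]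
        rfl
    have hD := hTUq ρ (Function.update g j e0)
    rw [← hup] at hD
    have hc := hxcram j
    have hx3 : x j = (B.updateCol j b).det ∨ x j = -(B.updateCol j b).det := by
      rcases hdet1 with hd | hd <;> rw [hd] at hc
      · left; linarith
      · right; linarith
    rcases hx3 with h4 | h4 <;> rcases hD with h | h | h <;> rw [h] at h4 <;> norm_num [h4]
  intro e
  by_cases hwe : w e = 0
  · right; left; rw [hwe, zero_div]
  by_cases hee : e = e0
  · subst hee
    right; right
    exact div_self he0
  have heS' : e ∈ S' := by
    rw [hS', Finset.mem_erase]
    exact ⟨hee, by simp [hS, hwe]⟩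
  have hge : g (eqv ⟨e, heS'⟩) = e := hginv e heS'
  have hxj : x (eqv ⟨e, heS'⟩) = -(w e / w e0) := by
    simp only [hx]
    rw [hge]
  have hv := hxval (eqv ⟨e, heS'⟩)
  rw [hxj] at hv
  rcases hv with h | h | h
  · right; right; linarith
  · right; left; linarith
  · left; linarith

lemma cast_mulVec {r m : ℕ} (A : Matrix (Fin r) (Fin m) ℤ) (x : Fin m → ℤ) (i : Fin r) :
    (A.map (Int.cast : ℤ → ℚ)).mulVec (fun e => (x e : ℚ)) i = ((A.mulVec x i : ℤ) : ℚ) := by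
  simp only [Matrix.mulVec, dotProduct, Matrix.map_apply]
  push_cast
  rfl

lemma exists_conformal_circuit {r m : ℕ} (A : Matrix (Fin r) (Fin m) ℤ)
    (hTU : A.IsTotallyUnimodular) (u : Fin m → ℤ) (hu : u ≠ 0) (hker : A.mulVec u = 0) :
    ∃ C, IsCircuit A C ∧ (∀ e, C e ≠ 0 → 0 < C e * u e) := by
  classical
  set Aq := A.map (Int.cast : ℤ → ℚ) with hAq
  set uq : Fin m → ℚ := fun e => (u e : ℚ) with huq
  have huq0 : uq ≠ 0 := by
    intro h
    apply hu
    funext e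
    have := congrFun h e
    simpa [huq] using this
  have hkerq : Aq.mulVec uq = 0 := by
    funext i
    rw [huq, hAq, cast_mulVec A u i, congrFun hker i]
    rfl
  obtain ⟨w, hw0, hwker, hwconf, hwmin⟩ := exists_min_conformal Aq uq huq0 hkerq
  obtain ⟨e0, he0⟩ := Function.ne_iff.mp hw0
  have he0' : w e0 ≠ 0 := by simpa using he0
  have hr := tu_ratio A hTU w hwker hwmin e0 he0'
  set c : ℚ := (if 0 < w e0 then 1 else -1) * (w e0)⁻¹ with hc
  have hcpos : 0 < c := by
    rw [hc]
    rcases lt_trichotomy (w e0) 0 with h | h | h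
    · rw [if_neg (by linarith)]
      have : (w e0)⁻¹ < 0 := inv_lt_zero.mpr h
      linarith
    · exact absurd h he0'
    · rw [if_pos h]
      have : 0 < (w e0)⁻¹ := inv_pos.mpr h
      linarith
  set q : Fin m → ℚ := fun e => c * w e with hq
  have hq3 : ∀ e, q e = -1 ∨ q e = 0 ∨ q e = 1 := by
    intro e
    have h1 := hr e
    have h2 : q e = (if 0 < w e0 then (1:ℚ) else -1) * (w e / w e0) := by
      simp only [hq, hc, div_eq_mul_inv]
      ring
    rcases h1 with h | h | h <;> rw [h2, h] <;> by_cases hp : 0 < w e0 <;>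
      simp [hp] <;> tauto
  set C : Fin m → ℤ := fun e => if q e = 1 then 1 else if q e = -1 then -1 else 0 with hC
  have hCq : ∀ e, (C e : ℚ) = q e := by
    intro e
    rw [hC]
    rcases hq3 e with h | h | h <;> norm_num [h]
  have hCsupp : ∀ e, C e ≠ 0 ↔ w e ≠ 0 := by
    intro e
    constructor
    · intro h hw
      apply h
      have hqe0 : q e = 0 := by simp only [hq]; rw [hw, mul_zero]
      have h5 := hCq e
      rw [hqe0] at h5
      exact_mod_cast h5
    · intro h hc0
      have h1 : q e ≠ 0 := mul_ne_zero (ne_of_gt hcpos) h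
      apply h1
      rw [← hCq e, hc0]
      rfl
  have hCsuppSet : {e | C e ≠ 0} = {e | w e ≠ 0} := Set.ext fun e => hCsupp e
  have hCsign : SignVec C := by
    intro e
    rw [hC]
    by_cases h1 : q e = 1
    · right; right; norm_num [h1]
    by_cases h2 : q e = -1
    · left; norm_num [h1, h2]
    · right; left; norm_num [h1, h2]
  have hC0 : C ≠ 0 := by
    intro h
    have h1 : C e0 = 0 := by rw [h]; rfl
    rw [← hCsupp e0] at he0'
    exact he0' h1
  have hCcast : (fun e => ((C e : ℚ))) = q := funext hCq
  have hCkerq : Aq.mulVec (fun e => ((C e : ℚ))) = 0 := by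
    rw [hCcast]
    have : q = c • w := by funext e; simp [hq]
    rw [this, mulVec_smul, hwker, smul_zero]
  have hCker : A.mulVec C = 0 := by
    funext i
    have h1 := congrFun hCkerq i
    rw [hAq, cast_mulVec A C i] at h1
    have : ((A.mulVec C i : ℤ) : ℚ) = 0 := h1
    exact_mod_cast this
  refine ⟨C, ⟨hCsign, hC0, hCker, ?_⟩, ?_⟩
  · intro v hv0 hvker hvsub
    set vq : Fin m → ℚ := fun e => (v e : ℚ) with hvq
    have hvq0 : vq ≠ 0 := by
      intro h
      apply hv0
      funext e
      have := congrFun h e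
      simpa [hvq] using this
    have hvkerq : Aq.mulVec vq = 0 := by
      funext i
      rw [hvq, hAq, cast_mulVec A v i, congrFun hvker i]
      rfl
    have hsetv : {e | vq e ≠ 0} = {e | v e ≠ 0} := by
      ext e
      simp [hvq, Int.cast_ne_zero]
    have := hwmin vq hvq0 hvkerq (by rw [hsetv, ← hCsuppSet]; exact hvsub)
    rw [hsetv, ← hCsuppSet] at this
    exact this
  · intro e hCe
    have hwe : w e ≠ 0 := (hCsupp e).mp hCe
    have h1 : 0 < w e * uq e := hwconf e hwe
    have hqe : q e = c * w e := by simp only [hq]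
    have h2 : 0 < (C e : ℚ) * uq e := by
      rw [hCq e, hqe]
      calc (0:ℚ) < c * (w e * uq e) := mul_pos hcpos h1
        _ = c * w e * uq e := by ring
    have h3 : ((C e * u e : ℤ) : ℚ) = (C e : ℚ) * uq e := by push_cast [huq]; rfl
    have : (0:ℚ) < ((C e * u e : ℤ) : ℚ) := by rw [h3]; exact h2
    exact_mod_cast this

lemma sign_of_pos_mul {a b : ℤ} (h : 0 < a * b) : Int.sign a = Int.sign b := by
  rcases lt_trichotomy a 0 with ha | ha | ha <;> rcases lt_trichotomy b 0 with hb | hb | hb <;>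
    simp_all [Int.sign_eq_one_of_pos, Int.sign_eq_neg_one_of_neg] <;> nlinarith

lemma decomp1 {r m : ℕ} (A : Matrix (Fin r) (Fin m) ℤ) (hTU : A.IsTotallyUnimodular) :
    ∀ n : ℕ, ∀ u : Fin m → ℤ, (∑ e, (u e).natAbs) ≤ n → A.mulVec u = 0 →
    ∃ (k : ℕ) (lam : Fin k → ℤ) (C : Fin k → (Fin m → ℤ)),
      (∀ i, 0 < lam i) ∧ (∀ i, IsCircuit A (C i)) ∧
      (∀ i e, C i e ≠ 0 → 0 < C i e * u e) ∧
      u = ∑ i, lam i • C i := by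
  intro n
  induction n with
  | zero =>
    intro u hsum hker
    have hu0 : u = 0 := by
      funext e
      have h1 : (u e).natAbs = 0 := by
        have := Finset.sum_eq_zero_iff.mp (Nat.le_zero.mp hsum) e (Finset.mem_univ e)
        exact this
      simp only [Pi.zero_apply]
      omega
    refine ⟨0, Fin.elim0, Fin.elim0, fun i => i.elim0, fun i => i.elim0, fun i => i.elim0, ?_⟩
    rw [hu0]
    simp
  | succ n ih =>
    intro u hsum hker
    by_cases hu0 : u = 0
    · refine ⟨0, Fin.elim0, Fin.elim0, fun i => i.elim0, fun i => i.elim0, fun i => i.elim0, ?_⟩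
      rw [hu0]
      simp
    obtain ⟨C, hCcirc, hCconf⟩ := exists_conformal_circuit A hTU u hu0 hker
    set u' : Fin m → ℤ := u - C with hu'
    have hCsign := hCcirc.1
    have hptwise : ∀ e, (C e ≠ 0 → (u' e).natAbs + 1 = (u e).natAbs) ∧ (C e = 0 → u' e = u e) := by
      intro e
      constructor
      · intro hCe
        have h1 := hCconf e hCe
        have h2 : u' e = u e - C e := by simp [hu']
        rcases hCsign e with h | h | h
        · rw [h] at h1
          rw [h2, h]
          omega
        · exact absurd h hCe
        · rw [h] at h1
          rw [h2, h]
          omega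
      · intro hCe
        simp [hu', hCe]
    have hconf' : ∀ e, u' e ≠ 0 → u e ≠ 0 ∧ 0 < u' e * u e := by
      intro e he
      by_cases hCe : C e = 0
      · have := (hptwise e).2 hCe
        rw [this] at he ⊢
        exact ⟨he, mul_self_pos.mpr he⟩
      · have h1 := hCconf e hCe
        have h2 : u' e = u e - C e := by simp [hu']
        rcases hCsign e with h | h | h
        · rw [h] at h1
          rw [h2, h] at he ⊢
          have h5 : u e < 0 := by nlinarith
          have h6 : u e ≤ -2 := by omega
          exact ⟨by omega, by nlinarith⟩
        · exact absurd h hCe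
        · rw [h] at h1
          rw [h2, h] at he ⊢
          have h5 : 0 < u e := by nlinarith
          have h6 : 2 ≤ u e := by omega
          exact ⟨by omega, by nlinarith⟩
    have hker' : A.mulVec u' = 0 := by
      rw [hu', mulVec_sub, hker, hCcirc.2.2.1, sub_self]
    have hsum' : (∑ e, (u' e).natAbs) ≤ n := by
      obtain ⟨e1, he1⟩ := Function.ne_iff.mp hCcirc.2.1
      have he1' : C e1 ≠ 0 := by simpa using he1
      have hlt : (∑ e, (u' e).natAbs) < ∑ e, (u e).natAbs := by
        apply Finset.sum_lt_sum
        · intro e _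
          by_cases hCe : C e = 0
          · rw [(hptwise e).2 hCe]
          · have := (hptwise e).1 hCe
            omega
        · refine ⟨e1, Finset.mem_univ e1, ?_⟩
          have := (hptwise e1).1 he1'
          omega
      omega
    obtain ⟨k, lam, Cs, hlam, hcirc, hconf, heq⟩ := ih u' hsum' hker'
    set lam' : Fin (k+1) → ℤ := Fin.cons 1 lam with hlam'
    set Cs' : Fin (k+1) → (Fin m → ℤ) := Fin.cons C Cs with hCs'
    refine ⟨k + 1, lam', Cs', ?_, ?_, ?_, ?_⟩
    · intro i
      refine Fin.cases ?_ ?_ i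
      · norm_num [hlam']
      · intro j
        simpa [hlam'] using hlam j
    · intro i
      refine Fin.cases ?_ ?_ i
      · simpa [hCs'] using hCcirc
      · intro j
        simpa [hCs'] using hcirc j
    · intro i
      refine Fin.cases ?_ ?_ i
      · intro e he
        simp only [hCs', Fin.cons_zero] at he ⊢
        exact hCconf e he
      · intro j e he
        simp only [hCs', Fin.cons_succ] at he ⊢
        have h1 := hconf j e he
        have hu'ne : u' e ≠ 0 := by
          intro h0
          rw [h0, mul_zero] at h1
          exact lt_irrefl 0 h1
        have h2 := hconf' e hu'ne
        nlinarith [mul_pos h1 h2.2, mul_self_pos.mpr hu'ne]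
    · have hs : (∑ i : Fin (k+1), lam' i • Cs' i)
          = lam' 0 • Cs' 0 + ∑ i : Fin k, lam' i.succ • Cs' i.succ :=
        Fin.sum_univ_succ (fun i : Fin (k+1) => lam' i • Cs' i)
      rw [hs]
      simp only [hlam', hCs', Fin.cons_zero, Fin.cons_succ, one_smul]
      rw [← heq, hu']
      abel

lemma decomp2 {r m : ℕ} (A : Matrix (Fin r) (Fin m) ℤ) (hTU : A.IsTotallyUnimodular) :
    ∀ n : ℕ, ∀ u : Fin m → ℤ, (∑ e, (u e).natAbs) ≤ n → A.mulVec u = 0 → SignVec u →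
    ∃ (k : ℕ) (C : Fin k → (Fin m → ℤ)),
      (∀ i, IsCircuit A (C i)) ∧
      (∀ i e, C i e ≠ 0 → 0 < C i e * u e) ∧
      (∀ i j, i ≠ j → ∀ e, C i e ≠ 0 → C j e = 0) ∧
      u = ∑ i, C i := by
  intro n
  induction n with
  | zero =>
    intro u hsum hker hsv
    have hu0 : u = 0 := by
      funext e
      have h1 : (u e).natAbs = 0 :=
        Finset.sum_eq_zero_iff.mp (Nat.le_zero.mp hsum) e (Finset.mem_univ e)
      simp only [Pi.zero_apply]
      omega
    refine ⟨0, Fin.elim0, fun i => i.elim0, fun i => i.elim0, fun i => i.elim0, ?_⟩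
    rw [hu0]; simp
  | succ n ih =>
    intro u hsum hker hsv
    by_cases hu0 : u = 0
    · refine ⟨0, Fin.elim0, fun i => i.elim0, fun i => i.elim0, fun i => i.elim0, ?_⟩
      rw [hu0]; simp
    obtain ⟨C, hCcirc, hCconf⟩ := exists_conformal_circuit A hTU u hu0 hker
    have hCsign := hCcirc.1
    have hCu : ∀ e, C e ≠ 0 → C e = u e := by
      intro e hCe
      have h1 := hCconf e hCe
      rcases hCsign e with h | h | h <;> rcases hsv e with h' | h' | h' <;>
        rw [h, h'] at h1 ⊢ <;> omega
    set u' : Fin m → ℤ := u - C with hu'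
    have hu'app : ∀ e, u' e = u e - C e := fun e => by simp [hu']
    have hu'zero : ∀ e, C e ≠ 0 → u' e = 0 := by
      intro e hCe
      rw [hu'app, hCu e hCe, sub_self]
    have hu'same : ∀ e, C e = 0 → u' e = u e := by
      intro e hCe
      rw [hu'app, hCe, sub_zero]
    have hsv' : SignVec u' := by
      intro e
      by_cases hCe : C e = 0
      · rw [hu'same e hCe]; exact hsv e
      · rw [hu'zero e hCe]; right; left; rfl
    have hker' : A.mulVec u' = 0 := by
      rw [hu', mulVec_sub, hker, hCcirc.2.2.1, sub_self]
    have hsum' : (∑ e, (u' e).natAbs) ≤ n := by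
      obtain ⟨e1, he1⟩ := Function.ne_iff.mp hCcirc.2.1
      have he1' : C e1 ≠ 0 := by simpa using he1
      have hlt : (∑ e, (u' e).natAbs) < ∑ e, (u e).natAbs := by
        apply Finset.sum_lt_sum
        · intro e _
          by_cases hCe : C e = 0
          · rw [hu'same e hCe]
          · rw [hu'zero e hCe]
            simp
        · refine ⟨e1, Finset.mem_univ e1, ?_⟩
          rw [hu'zero e1 he1']
          have h2 : u e1 ≠ 0 := by
            have := hCu e1 he1'
            intro h0
            rw [h0] at this
            exact he1' this
          simp only [Int.natAbs_zero]
          omega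
      omega
    obtain ⟨k, Cs, hcirc, hconf, hdisj, heq⟩ := ih u' hsum' hker' hsv'
    have hnew : ∀ j e, Cs j e ≠ 0 → C e = 0 := by
      intro j e hje
      have h1 := hconf j e hje
      have hu'ne : u' e ≠ 0 := by
        intro h0
        rw [h0, mul_zero] at h1
        exact lt_irrefl 0 h1
      by_contra hCe
      exact hu'ne (hu'zero e hCe)
    set Cs' : Fin (k+1) → (Fin m → ℤ) := Fin.cons C Cs with hCs'
    refine ⟨k + 1, Cs', ?_, ?_, ?_, ?_⟩
    · intro i
      refine Fin.cases ?_ ?_ i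
      · simpa [hCs'] using hCcirc
      · intro j
        simpa [hCs'] using hcirc j
    · intro i
      refine Fin.cases ?_ ?_ i
      · intro e he
        simp only [hCs', Fin.cons_zero] at he ⊢
        exact hCconf e he
      · intro j e he
        simp only [hCs', Fin.cons_succ] at he ⊢
        have h1 := hconf j e he
        have hu'ne : u' e ≠ 0 := by
          intro h0
          rw [h0, mul_zero] at h1
          exact lt_irrefl 0 h1
        have hCe : C e = 0 := hnew j e he
        rw [hu'same e hCe] at h1
        exact h1
    · intro i j hij e hie
      rcases Fin.eq_zero_or_eq_succ i with hi | ⟨i', rfl⟩ <;>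
        rcases Fin.eq_zero_or_eq_succ j with hj | ⟨j', rfl⟩
      · exact absurd (hi.trans hj.symm) hij
      · subst hi
        simp only [hCs', Fin.cons_zero] at hie
        simp only [hCs', Fin.cons_succ]
        by_contra h
        exact hie (hnew j' e h)
      · subst hj
        simp only [hCs', Fin.cons_succ] at hie
        simp only [hCs', Fin.cons_zero]
        exact hnew i' e hie
      · simp only [hCs', Fin.cons_succ] at hie ⊢
        exact hdisj i' j' (fun h => hij (by rw [h])) e hie
    · have hs : (∑ i : Fin (k+1), Cs' i) = Cs' 0 + ∑ i : Fin k, Cs' i.succ :=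
        Fin.sum_univ_succ (fun i : Fin (k+1) => Cs' i)
      rw [hs]
      simp only [hCs', Fin.cons_zero, Fin.cons_succ]
      rw [← heq, hu']
      abel

/-- Integral circuit decomposition: a nonzero integer kernel vector is a positive integral
combination of signed circuits conformal to it; if moreover its entries lie in `{-1,0,1}`,
the circuits can be taken with coefficient `1` and pairwise disjoint supports. -/
theorem stmt15 {r m : ℕ} (A : Matrix (Fin r) (Fin m) ℤ) (hTU : A.IsTotallyUnimodular)
    (u : Fin m → ℤ) (hu : u ≠ 0) (hker : A.mulVec u = 0) :
    (∃ (k : ℕ) (lam : Fin k → ℤ) (C : Fin k → (Fin m → ℤ)),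
      (∀ i, 0 < lam i) ∧ (∀ i, IsCircuit A (C i)) ∧
      (∀ i e, C i e ≠ 0 → u e ≠ 0 ∧ Int.sign (C i e) = Int.sign (u e)) ∧
      u = ∑ i, lam i • C i) ∧
    (SignVec u → ∃ (k : ℕ) (C : Fin k → (Fin m → ℤ)),
      (∀ i, IsCircuit A (C i)) ∧
      (∀ i e, C i e ≠ 0 → u e ≠ 0 ∧ Int.sign (C i e) = Int.sign (u e)) ∧
      (∀ i j, i ≠ j → ∀ e, C i e ≠ 0 → C j e = 0) ∧
      u = ∑ i, C i) := by
  constructor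
  · obtain ⟨k, lam, C, hlam, hcirc, hconf, heq⟩ :=
      decomp1 A hTU (∑ e, (u e).natAbs) u le_rfl hker
    refine ⟨k, lam, C, hlam, hcirc, fun i e he => ?_, heq⟩
    have h1 := hconf i e he
    refine ⟨fun h0 => ?_, sign_of_pos_mul h1⟩
    rw [h0, mul_zero] at h1
    exact lt_irrefl 0 h1
  · intro hsv
    obtain ⟨k, C, hcirc, hconf, hdisj, heq⟩ :=
      decomp2 A hTU (∑ e, (u e).natAbs) u le_rfl hker hsv
    refine ⟨k, C, hcirc, fun i e he => ?_, hdisj, heq⟩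
    have h1 := hconf i e he
    refine ⟨fun h0 => ?_, sign_of_pos_mul h1⟩
    rw [h0, mul_zero] at h1
    exact lt_irrefl 0 h1
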